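/- (Gauss identity / c=1 twisted character decomposition) As formal power series in x, ∏_{m=1}^∞ (1 − x^{2m−1})^{-1} = (∏_{m=1}^∞ (1 − x^{2m})^{-1}) · ∑_{n=0}^∞ x^{n(n+1)/2}. Equivalently, ∑_{n=0}^∞ x^{n(n+1)/2} = ∏_{m=1}^∞ (1 − x^{2m})/(1 − x^{2m−1}). -/

import Mathlib

open PowerSeries Finset

namespace GaussAux

open Polynomial

/-- triangular numbers: `tri k = k*(k-1)/2`. -/
def tri : ℕ → ℕ
  | 0 => 0
  | k+1 => tri k + k

@[simp] lemma tri_zero : tri 0 = 0 := rfl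
lemma tri_succ (k : ℕ) : tri (k+1) = tri k + k := rfl

lemma tri_add (a b : ℕ) : tri (a+b) = tri a + tri b + a*b := by
  induction b with
  | zero => simp
  | succ b ih =>
      have : a + (b+1) = (a+b) + 1 := by omega
      rw [this, tri_succ, ih, tri_succ]
      ring

lemma two_mul_tri (j : ℕ) : 2 * tri j + j = j * j := by
  induction j with
  | zero => rfl
  | succ j ih => rw [tri_succ]; nlinarith [ih]

lemma le_tri_succ (j : ℕ) : j ≤ tri (j+1) := by
  rw [tri_succ]; omega

lemma tri_eq (n : ℕ) : n*(n+1)/2 = tri (n+1) := by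
  have h := two_mul_tri (n+1)
  have : n * (n+1) = tri (n+1) * 2 := by nlinarith [h]
  exact Nat.div_eq_of_eq_mul_left (by norm_num) this

/-- Gaussian binomial coefficients as integer polynomials. -/
noncomputable def gb : ℕ → ℕ → Polynomial ℤ
  | _, 0 => 1
  | 0, _+1 => 0
  | m+1, k+1 => gb m k + Polynomial.X^(k+1) * gb m (k+1)

@[simp] lemma gb_zero_right (m : ℕ) : gb m 0 = 1 := by cases m <;> rfl

lemma gb_succ_succ (m k : ℕ) :
    gb (m+1) (k+1) = gb m k + Polynomial.X^(k+1) * gb m (k+1) := rfl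

lemma gb_eq_zero : ∀ m k : ℕ, m < k → gb m k = 0 := by
  intro m
  induction m with
  | zero => intro k hk; match k, hk with | (k+1), _ => rfl
  | succ m ih =>
      intro k hk
      match k, hk with
      | (k+1), hk =>
        rw [gb_succ_succ, ih k (by omega), ih (k+1) (by omega)]
        simp

@[simp] lemma gb_self (m : ℕ) : gb m m = 1 := by
  induction m with
  | zero => rfl
  | succ m ih => rw [gb_succ_succ, ih, gb_eq_zero m (m+1) (by omega)]; simp

lemma gb_one (m : ℕ) : gb m 1 = ∑ i ∈ range m, (X : Polynomial ℤ)^i := by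
  induction m with
  | zero => rfl
  | succ m ih =>
      rw [gb_succ_succ, ih, gb_zero_right]
      have h1 := geom_sum_succ (x := (Polynomial.X : Polynomial ℤ)) (n := m)
      have h2 := geom_sum_succ' (x := (Polynomial.X : Polynomial ℤ)) (n := m)
      linear_combination -h1


lemma pascal' : ∀ m k : ℕ, k ≤ m →
    gb (m+1) (k+1) = gb m (k+1) + Polynomial.X^(m-k) * gb m k := by
  intro m
  induction m with
  | zero =>
      intro k hk
      interval_cases k
      rw [gb_succ_succ]
      norm_num [gb_eq_zero 0 1 (by omega)]
  | succ m ih =>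
      intro k hk
      match k with
      | 0 =>
          rw [gb_succ_succ, gb_one, gb_zero_right, Nat.sub_zero]
          have h1 := geom_sum_succ (x := (Polynomial.X : Polynomial ℤ)) (n := m+1)
          have h2 := geom_sum_succ' (x := (Polynomial.X : Polynomial ℤ)) (n := m+1)
          linear_combination h2 - h1
      | k+1 =>
          have hk' : k ≤ m := by omega
          by_cases hkm : k + 1 ≤ m
          · -- use ih at k and k+1
            have e1 : gb (m+2) (k+2) = gb (m+1) (k+1) + Polynomial.X^(k+2) * gb (m+1) (k+2) :=
              gb_succ_succ (m+1) (k+1)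
            have e2 : gb (m+1) (k+2) = gb m (k+2) + Polynomial.X^(m-(k+1)) * gb m (k+1) :=
              ih (k+1) hkm
            have e3 : gb (m+1) (k+1) = gb m (k+1) + Polynomial.X^(m-k) * gb m k := ih k hk'
            have e4 : gb (m+1) (k+2) = gb m (k+1) + Polynomial.X^(k+2) * gb m (k+2) :=
              gb_succ_succ m (k+1)
            have e5 : gb (m+1) (k+1) = gb m k + Polynomial.X^(k+1) * gb m (k+1) :=
              gb_succ_succ m k
            have hx1 : (Polynomial.X : Polynomial ℤ)^(k+2) * Polynomial.X^(m-(k+1))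
                = Polynomial.X^(m+1) := by
              rw [← pow_add]; congr 1; omega
            have hx2 : (Polynomial.X : Polynomial ℤ)^(m-k) * Polynomial.X^(k+1)
                = Polynomial.X^(m+1) := by
              rw [← pow_add]; congr 1; omega
            rw [show (m+1)-(k+1) = m-k from by omega]
            linear_combination e1 + Polynomial.X^(k+2) * e2 + e3 - e4
              - Polynomial.X^(m-k) * e5 + gb m (k+1) * hx1 - gb m (k+1) * hx2
          · have hkm' : k = m := by omega
            subst hkm'
            rw [gb_self, gb_eq_zero (k+1) (k+2) (by omega)]
            simp

lemma gb_step (m k : ℕ) (hk : k ≤ m) :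
    gb m k * (1 - Polynomial.X^(m-k)) = gb m (k+1) * (1 - Polynomial.X^(k+1)) := by
  have h1 := gb_succ_succ m k
  have h2 := pascal' m k hk
  linear_combination h2 - h1

/-- `(q;q)_n` -/
noncomputable def W (n : ℕ) : Polynomial ℤ := ∏ i ∈ range n, (1 - Polynomial.X^(i+1))

lemma gbW : ∀ m k : ℕ, k ≤ m → gb m k * (W k * W (m-k)) = W m := by
  intro m
  induction m with
  | zero => intro k hk; interval_cases k; simp [W]
  | succ m ih =>
      intro k hk
      match k with
      | 0 => simp [W]
      | k+1 =>
          have hk' : k ≤ m := by omega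
          rw [gb_succ_succ]
          by_cases hkm : k = m
          · subst hkm
            rw [gb_eq_zero k (k+1) (by omega), gb_self]
            have : k + 1 - (k+1) = 0 := by omega
            rw [this]
            simp [W]
          · have hlt : k + 1 ≤ m := by omega
            have i1 := ih k hk'
            have i2 := ih (k+1) hlt
            have w1 : W (k+1) = W k * (1 - Polynomial.X^(k+1)) := Finset.prod_range_succ _ _
            have w2 : W (m-k) = W (m-(k+1)) * (1 - Polynomial.X^(m-k)) := by
              have hmk : m - k = (m - (k+1)) + 1 := by omega
              rw [hmk]
              exact Finset.prod_range_succ _ _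
            have w3 : W (m+1) = W m * (1 - Polynomial.X^(m+1)) := Finset.prod_range_succ _ _
            have hmk1 : m + 1 - (k+1) = m - k := by omega
            have hx : (Polynomial.X : Polynomial ℤ)^(k+1) * Polynomial.X^(m-k)
                = Polynomial.X^(m+1) := by
              rw [← pow_add]; congr 1; omega
            have t1 : gb m k * (W (k+1) * W (m-k)) = W m * (1 - Polynomial.X^(k+1)) := by
              rw [w1]; linear_combination (1 - (Polynomial.X:Polynomial ℤ)^(k+1)) * i1
            have t2 : gb m (k+1) * (W (k+1) * W (m-k)) = W m * (1 - Polynomial.X^(m-k)) := by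
              rw [w2]; linear_combination (1 - (Polynomial.X:Polynomial ℤ)^(m-k)) * i2
            rw [hmk1, w3]
            linear_combination t1 + Polynomial.X^(k+1) * t2 - W m * hx


lemma chain_up (n : ℕ) : ∀ j : ℕ, j ≤ n →
    (Polynomial.X : Polynomial ℤ)^(n-j) ∣ gb (2*n) (n+j) - gb (2*n) n := by
  intro j
  induction j with
  | zero => intro _; simp
  | succ j ih =>
      intro hj
      have h1 := ih (by omega)
      have hs := gb_step (2*n) (n+j) (by omega)
      rw [show 2*n - (n+j) = n-j from by omega] at hs
      have h2 : (Polynomial.X : Polynomial ℤ)^(n-(j+1)) ∣ gb (2*n) (n+j+1) - gb (2*n) (n+j) := by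
        have e : gb (2*n) (n+j+1) - gb (2*n) (n+j)
            = gb (2*n) (n+j+1) * Polynomial.X^(n+j+1) - gb (2*n) (n+j) * Polynomial.X^(n-j) := by
          linear_combination -hs
        rw [e]
        exact dvd_sub (Dvd.dvd.mul_left (pow_dvd_pow _ (by omega)) _)
          (Dvd.dvd.mul_left (pow_dvd_pow _ (by omega)) _)
      have := dvd_add h2 (dvd_trans (pow_dvd_pow _ (by omega : n-(j+1) ≤ n-j)) h1)
      rw [show n+(j+1) = n+j+1 from by omega]
      calc (Polynomial.X : Polynomial ℤ)^(n-(j+1)) ∣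
          (gb (2*n) (n+j+1) - gb (2*n) (n+j)) + (gb (2*n) (n+j) - gb (2*n) n) := this
        _ = gb (2*n) (n+j+1) - gb (2*n) n := by ring

lemma chain_down (n : ℕ) : ∀ j : ℕ, j < n →
    (Polynomial.X : Polynomial ℤ)^(n-j) ∣ gb (2*n) (n-1-j) - gb (2*n) n := by
  intro j
  induction j with
  | zero =>
      intro hj
      have hs := gb_step (2*n) (n-1) (by omega)
      rw [show 2*n - (n-1) = n+1 from by omega, show n-1+1 = n from by omega] at hs
      have e : gb (2*n) (n-1-0) - gb (2*n) n
          = gb (2*n) (n-1) * Polynomial.X^(n+1) - gb (2*n) n * Polynomial.X^n := by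
        rw [Nat.sub_zero]
        linear_combination hs
      rw [Nat.sub_zero, e]
      exact dvd_sub (Dvd.dvd.mul_left (pow_dvd_pow _ (by omega)) _)
        (Dvd.dvd.mul_left (pow_dvd_pow _ (by omega)) _)
  | succ j ih =>
      intro hj
      have h1 := ih (by omega)
      have hs := gb_step (2*n) (n-2-j) (by omega)
      rw [show 2*n - (n-2-j) = n+2+j from by omega, show n-2-j+1 = n-1-j from by omega] at hs
      have h2 : (Polynomial.X : Polynomial ℤ)^(n-(j+1)) ∣ gb (2*n) (n-2-j) - gb (2*n) (n-1-j) := by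
        have e : gb (2*n) (n-2-j) - gb (2*n) (n-1-j)
            = gb (2*n) (n-2-j) * Polynomial.X^(n+2+j) - gb (2*n) (n-1-j) * Polynomial.X^(n-1-j) := by
          linear_combination hs
        rw [e]
        exact dvd_sub (Dvd.dvd.mul_left (pow_dvd_pow _ (by omega)) _)
          (Dvd.dvd.mul_left (pow_dvd_pow _ (by omega)) _)
      have h3 := dvd_add h2 (dvd_trans (pow_dvd_pow _ (by omega : n-(j+1) ≤ n-j)) h1)
      rw [show n-1-(j+1) = n-2-j from by omega]
      calc (Polynomial.X : Polynomial ℤ)^(n-(j+1)) ∣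
          (gb (2*n) (n-2-j) - gb (2*n) (n-1-j)) + (gb (2*n) (n-1-j) - gb (2*n) n) := h3
        _ = gb (2*n) (n-2-j) - gb (2*n) n := by ring


set_option maxHeartbeats 400000 in
lemma qbinom (m : ℕ) :
    ∏ i ∈ range m, ((Polynomial.X : Polynomial (Polynomial ℤ)) + Polynomial.C ((Polynomial.X : Polynomial ℤ)^i))
      = ∑ k ∈ range (m+1), Polynomial.C (gb m k * (Polynomial.X : Polynomial ℤ)^(tri k)) *
          (Polynomial.X : Polynomial (Polynomial ℤ))^(m-k) := by
  induction m with
  | zero => simp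
  | succ m ih =>
      rw [Finset.prod_range_succ, ih]
      rw [Finset.sum_range_succ' (fun k => Polynomial.C (gb (m+1) k * (Polynomial.X : Polynomial ℤ)^(tri k)) *
          (Polynomial.X : Polynomial (Polynomial ℤ))^(m+1-k))]
      have expand : (∑ k ∈ range (m+1), Polynomial.C (gb m k * (Polynomial.X : Polynomial ℤ)^(tri k)) *
            (Polynomial.X : Polynomial (Polynomial ℤ))^(m-k)) *
            ((Polynomial.X : Polynomial (Polynomial ℤ)) + Polynomial.C ((Polynomial.X : Polynomial ℤ)^m))
          = (∑ k ∈ range (m+1), Polynomial.C (gb m k * (Polynomial.X:Polynomial ℤ)^(tri k)) *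
              (Polynomial.X : Polynomial (Polynomial ℤ))^(m-k) * Polynomial.X)
            + ∑ k ∈ range (m+1), Polynomial.C (gb m k * ((Polynomial.X:Polynomial ℤ)^(tri k) * (Polynomial.X:Polynomial ℤ)^m)) *
              (Polynomial.X : Polynomial (Polynomial ℤ))^(m-k) := by
        rw [mul_add, Finset.sum_mul, Finset.sum_mul]
        rw [add_right_inj]
        apply Finset.sum_congr rfl
        intro k _
        simp only [map_mul]
        ring
      rw [expand]
      have keysum : (∑ k ∈ range (m+1), Polynomial.C (gb (m+1) (k+1) * (Polynomial.X : Polynomial ℤ)^(tri (k+1))) *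
            (Polynomial.X : Polynomial (Polynomial ℤ))^(m+1-(k+1)))
          = (∑ k ∈ range (m+1), Polynomial.C (gb m (k+1) * (Polynomial.X : Polynomial ℤ)^(tri (k+1))) *
              (Polynomial.X : Polynomial (Polynomial ℤ))^(m-k))
            + ∑ k ∈ range (m+1), Polynomial.C (gb m k * ((Polynomial.X:Polynomial ℤ)^(tri k) * (Polynomial.X:Polynomial ℤ)^m)) *
              (Polynomial.X : Polynomial (Polynomial ℤ))^(m-k) := by
        rw [← Finset.sum_add_distrib]
        apply Finset.sum_congr rfl
        intro k hk
        rw [Finset.mem_range] at hk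
        have hk' : k ≤ m := by omega
        rw [show m+1-(k+1) = m-k from by omega, pascal' m k hk']
        have hxa : (Polynomial.X:Polynomial ℤ)^(m-k) * (Polynomial.X:Polynomial ℤ)^(tri (k+1))
            = (Polynomial.X:Polynomial ℤ)^(tri k) * (Polynomial.X:Polynomial ℤ)^m := by
          rw [← pow_add, ← pow_add]; congr 1; rw [tri_succ]; omega
        have arg : (gb m (k+1) + (Polynomial.X:Polynomial ℤ)^(m-k) * gb m k) *
              (Polynomial.X:Polynomial ℤ)^(tri (k+1))
            = gb m (k+1) * (Polynomial.X:Polynomial ℤ)^(tri (k+1))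
              + gb m k * ((Polynomial.X:Polynomial ℤ)^(tri k) * (Polynomial.X:Polynomial ℤ)^m) := by
          linear_combination gb m k * hxa
        rw [arg, map_add, add_mul]
      rw [keysum]
      have hS1 : (∑ k ∈ range (m+1), Polynomial.C (gb m k * (Polynomial.X:Polynomial ℤ)^(tri k)) *
            (Polynomial.X : Polynomial (Polynomial ℤ))^(m-k) * Polynomial.X)
          = (∑ k ∈ range (m+1), Polynomial.C (gb m (k+1) * (Polynomial.X : Polynomial ℤ)^(tri (k+1))) *
              (Polynomial.X : Polynomial (Polynomial ℤ))^(m-k))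
            + Polynomial.C (gb (m+1) 0 * (Polynomial.X : Polynomial ℤ)^(tri 0)) *
              (Polynomial.X : Polynomial (Polynomial ℤ))^(m+1-0) := by
        rw [Finset.sum_range_succ' (fun k => Polynomial.C (gb m k * (Polynomial.X:Polynomial ℤ)^(tri k)) *
            (Polynomial.X : Polynomial (Polynomial ℤ))^(m-k) * Polynomial.X)]
        rw [Finset.sum_range_succ (fun k => Polynomial.C (gb m (k+1) * (Polynomial.X : Polynomial ℤ)^(tri (k+1))) *
            (Polynomial.X : Polynomial (Polynomial ℤ))^(m-k))]
        rw [gb_eq_zero m (m+1) (by omega)]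
        simp only [zero_mul, map_zero, add_zero]
        congr 1
        · apply Finset.sum_congr rfl
          intro k hk
          rw [Finset.mem_range] at hk
          rw [mul_assoc, ← pow_succ, show m-(k+1) + 1 = m-k from by omega]
        · rw [gb_zero_right, gb_zero_right, Nat.sub_zero, Nat.sub_zero, mul_assoc, ← pow_succ]
      rw [hS1]
      ring

lemma qbinom_eval (m t : ℕ) :
    ∏ i ∈ range m, ((Polynomial.X : Polynomial ℤ)^t + Polynomial.X^i)
      = ∑ k ∈ range (m+1), gb m k * Polynomial.X^(tri k + t*(m-k)) := by
  have h := congrArg (Polynomial.eval ((Polynomial.X : Polynomial ℤ)^t)) (qbinom m)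
  simp only [Polynomial.eval_prod, Polynomial.eval_finset_sum, Polynomial.eval_add,
    Polynomial.eval_mul, Polynomial.eval_pow, Polynomial.eval_X, Polynomial.eval_C] at h
  rw [h]
  apply Finset.sum_congr rfl
  intro k _
  rw [← pow_mul, mul_assoc, ← pow_add]

noncomputable def Hh (n : ℕ) : Polynomial ℤ := ∏ i ∈ range n, (1 + Polynomial.X^(i+1))
noncomputable def Gp (n : ℕ) : Polynomial ℤ := ∏ i ∈ range n, (1 + Polynomial.X^i)
noncomputable def Od (n : ℕ) : Polynomial ℤ := ∏ i ∈ range n, (1 - Polynomial.X^(2*i+1))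
noncomputable def Ev (n : ℕ) : Polynomial ℤ := ∏ i ∈ range n, (1 - Polynomial.X^(2*i+2))
noncomputable def S (n : ℕ) : Polynomial ℤ := ∑ j ∈ range n, Polynomial.X^(tri (j+1))

lemma sum_range_id_tri (n : ℕ) : ∑ i ∈ range n, i = tri n := by
  induction n with
  | zero => simp
  | succ n ih => rw [Finset.sum_range_succ, ih, tri_succ]

lemma Gp_succ (n : ℕ) : Gp (n+1) = 2 * Hh n := by
  rw [Gp, Finset.prod_range_succ' (fun i => 1 + (Polynomial.X : Polynomial ℤ)^i), ← Hh]
  norm_num [mul_comm]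

lemma HW (n : ℕ) : Hh n * W n = Ev n := by
  induction n with
  | zero => simp [Hh, W, Ev]
  | succ n ih =>
      rw [Hh, W, Ev, Finset.prod_range_succ, Finset.prod_range_succ, Finset.prod_range_succ,
        ← Hh, ← W, ← Ev]
      have hx : (Polynomial.X : Polynomial ℤ)^(n+1) * Polynomial.X^(n+1)
          = Polynomial.X^(2*n+2) := by
        rw [← pow_add]; congr 1; omega
      linear_combination (1 - (Polynomial.X : Polynomial ℤ)^(n+1) * Polynomial.X^(n+1)) * ih
        - Ev n * hx

lemma W2 (n : ℕ) : W (2*n) = Od n * Ev n := by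
  induction n with
  | zero => simp [W, Od, Ev]
  | succ n ih =>
      have h1 : 2*(n+1) = (2*n+1)+1 := by omega
      rw [h1, W, Finset.prod_range_succ, Finset.prod_range_succ, ← W]
      rw [Od, Ev, Finset.prod_range_succ, Finset.prod_range_succ, ← Od, ← Ev, ih]
      rw [show 2*n+1+1 = 2*n+2 from by omega]
      ring

lemma pow_dvd_mul_pow {p : Polynomial ℤ} {a c b : ℕ}
    (h : (Polynomial.X : Polynomial ℤ)^a ∣ p) (hb : b ≤ a + c) :
    (Polynomial.X : Polynomial ℤ)^b ∣ p * Polynomial.X^c := by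
  obtain ⟨e, rfl⟩ := h
  exact dvd_trans (pow_dvd_pow _ hb) ⟨e, by rw [pow_add]; ring⟩

lemma strip_X_pow {p : Polynomial ℤ} {a c : ℕ}
    (h : (Polynomial.X : Polynomial ℤ)^(a+c) ∣ Polynomial.X^a * p) :
    (Polynomial.X : Polynomial ℤ)^c ∣ p := by
  rw [Polynomial.X_pow_dvd_iff] at h ⊢
  intro d hd
  have h2 := h (d + a) (by omega)
  rwa [Polynomial.coeff_X_pow_mul] at h2

lemma strip_two {p : Polynomial ℤ} {c : ℕ}
    (h : (Polynomial.X : Polynomial ℤ)^c ∣ 2 * p) :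
    (Polynomial.X : Polynomial ℤ)^c ∣ p := by
  rw [Polynomial.X_pow_dvd_iff] at h ⊢
  intro d hd
  have h2 := h d hd
  rw [show (2 : Polynomial ℤ) = Polynomial.C 2 from by norm_num, Polynomial.coeff_C_mul] at h2
  omega

lemma split_sum {M : Type*} [AddCommMonoid M] (f : ℕ → M) (n : ℕ) :
    ∑ k ∈ range (2*n+1), f k
      = ((∑ j ∈ range n, f (n-1-j)) + ∑ j ∈ range n, f (n+j)) + f (2*n) := by
  rw [Finset.sum_range_succ, show 2*n = n + n from by omega, Finset.sum_range_add,
    ← Finset.sum_range_reflect f n]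

lemma exponent_up (N j : ℕ) (hj : j ≤ N) :
    tri (N+1+j) + N*(2*(N+1) - (N+1+j)) = (tri (N+1) + N*(N+1)) + tri (j+1) := by
  obtain ⟨t, rfl⟩ : ∃ t, N = j + t := ⟨N - j, by omega⟩
  rw [show 2*((j+t)+1) - ((j+t)+1+j) = t+1 from by omega]
  rw [show (j+t)+1+j = ((j+t)+1) + j from rfl]
  rw [tri_add ((j+t)+1) j, tri_succ (j+t), tri_succ j]
  ring

lemma exponent_down (N j : ℕ) (hj : j ≤ N) :
    tri (N-j) + N*(2*(N+1) - (N-j)) = (tri (N+1) + N*(N+1)) + tri (j+1) := by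
  obtain ⟨t, rfl⟩ : ∃ t, N = j + t := ⟨N - j, by omega⟩
  rw [show (j+t) - j = t from by omega]
  rw [show 2*((j+t)+1) - t = 2*j+t+2 from by omega]
  rw [tri_succ (j+t), tri_add j t, tri_succ j]
  have h := two_mul_tri j
  zify
  have h' : (2 * tri j + j : ℤ) = j * j := by exact_mod_cast h
  linear_combination -h'

lemma exponent_last (N : ℕ) :
    tri (2*(N+1)) + N*(2*(N+1) - 2*(N+1)) = (tri (N+1) + N*(N+1)) + tri (N+2) := by
  rw [Nat.sub_self, Nat.mul_zero, Nat.add_zero]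
  rw [show 2*(N+1) = (N+1) + (N+1) from by omega, tri_add, tri_succ (N+1)]
  ring

lemma sum_congr_dvd (N : ℕ) :
    (Polynomial.X : Polynomial ℤ)^((tri (N+1) + N*(N+1)) + (N+1)) ∣
      (∑ k ∈ range (2*(N+1)+1), gb (2*(N+1)) k * Polynomial.X^(tri k + N*(2*(N+1)-k)))
      - Polynomial.X^(tri (N+1) + N*(N+1)) * (2 * gb (2*(N+1)) (N+1) * S (N+1)) := by
  have hsplit := split_sum (fun k => gb (2*(N+1)) k * (Polynomial.X : Polynomial ℤ)^(tri k + N*(2*(N+1)-k))) (N+1)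
  rw [hsplit]
  have hc1 : ∑ j ∈ range (N+1), gb (2*(N+1)) (N+1-1-j) *
        (Polynomial.X : Polynomial ℤ)^(tri (N+1-1-j) + N*(2*(N+1)-(N+1-1-j)))
      = ∑ j ∈ range (N+1), gb (2*(N+1)) (N-j) *
        (Polynomial.X : Polynomial ℤ)^((tri (N+1) + N*(N+1)) + tri (j+1)) := by
    apply Finset.sum_congr rfl
    intro j hj
    rw [Finset.mem_range] at hj
    rw [show N+1-1-j = N-j from by omega, exponent_down N j (by omega)]
  have hc2 : ∑ j ∈ range (N+1), gb (2*(N+1)) (N+1+j) *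
        (Polynomial.X : Polynomial ℤ)^(tri (N+1+j) + N*(2*(N+1)-(N+1+j)))
      = ∑ j ∈ range (N+1), gb (2*(N+1)) (N+1+j) *
        (Polynomial.X : Polynomial ℤ)^((tri (N+1) + N*(N+1)) + tri (j+1)) := by
    apply Finset.sum_congr rfl
    intro j hj
    rw [Finset.mem_range] at hj
    rw [exponent_up N j (by omega)]
  have hlast : gb (2*(N+1)) (2*(N+1)) *
        (Polynomial.X : Polynomial ℤ)^(tri (2*(N+1)) + N*(2*(N+1)-2*(N+1)))
      = (Polynomial.X : Polynomial ℤ)^((tri (N+1) + N*(N+1)) + tri (N+2)) := by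
    rw [gb_self, one_mul, exponent_last N]
  have hS : (Polynomial.X : Polynomial ℤ)^(tri (N+1) + N*(N+1)) * (2 * gb (2*(N+1)) (N+1) * S (N+1))
      = ∑ j ∈ range (N+1), 2 * gb (2*(N+1)) (N+1) *
        (Polynomial.X : Polynomial ℤ)^((tri (N+1) + N*(N+1)) + tri (j+1)) := by
    rw [S, Finset.mul_sum, Finset.mul_sum]
    apply Finset.sum_congr rfl
    intro j _
    rw [pow_add]
    ring
  rw [hc1, hc2, hlast, hS]
  have habc : ∀ (a b c d : Polynomial ℤ), a + b + c - d = ((a + b) - d) + c := by intros; ring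
  rw [habc]
  apply dvd_add
  · rw [← Finset.sum_add_distrib, ← Finset.sum_sub_distrib]
    apply Finset.dvd_sum
    intro j hj
    rw [Finset.mem_range] at hj
    have hterm : gb (2*(N+1)) (N-j) * (Polynomial.X : Polynomial ℤ)^((tri (N+1) + N*(N+1)) + tri (j+1))
          + gb (2*(N+1)) (N+1+j) * (Polynomial.X : Polynomial ℤ)^((tri (N+1) + N*(N+1)) + tri (j+1))
          - 2 * gb (2*(N+1)) (N+1) * (Polynomial.X : Polynomial ℤ)^((tri (N+1) + N*(N+1)) + tri (j+1))
        = ((gb (2*(N+1)) ((N+1)-1-j) - gb (2*(N+1)) (N+1))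
            + (gb (2*(N+1)) ((N+1)+j) - gb (2*(N+1)) (N+1))) *
          (Polynomial.X : Polynomial ℤ)^((tri (N+1) + N*(N+1)) + tri (j+1)) := by
      rw [show (N+1)-1-j = N-j from by omega]
      ring
    rw [hterm]
    apply pow_dvd_mul_pow (dvd_add (chain_down (N+1) j (by omega)) (chain_up (N+1) j (by omega)))
    have h1 := le_tri_succ j
    omega
  · apply pow_dvd_pow
    have h1 : N+1 ≤ tri (N+2) := le_tri_succ (N+1)
    omega

lemma lhs_split (N : ℕ) :
    ∏ i ∈ range (2*(N+1)), ((Polynomial.X : Polynomial ℤ)^N + Polynomial.X^i)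
      = Polynomial.X^(tri (N+1) + N*(N+1)) * (Gp (N+1) * Hh (N+1)) := by
  rw [show 2*(N+1) = (N+1) + (N+1) from by omega, Finset.prod_range_add]
  have hfirst : ∏ i ∈ range (N+1), ((Polynomial.X : Polynomial ℤ)^N + Polynomial.X^i)
      = Polynomial.X^(tri (N+1)) * Gp (N+1) := by
    have h1 : ∀ i ∈ range (N+1), ((Polynomial.X : Polynomial ℤ)^N + Polynomial.X^i)
        = Polynomial.X^i * (1 + Polynomial.X^(N-i)) := by
      intro i hi
      rw [Finset.mem_range] at hi
      rw [mul_add, mul_one, ← pow_add, show i + (N-i) = N from by omega, add_comm]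
    rw [Finset.prod_congr rfl h1, Finset.prod_mul_distrib,
      Finset.prod_pow_eq_pow_sum (range (N+1)) (fun i => i), sum_range_id_tri]
    congr 1
    rw [Gp, ← Finset.prod_range_reflect (fun i => 1 + (Polynomial.X : Polynomial ℤ)^i) (N+1)]
    apply Finset.prod_congr rfl
    intro i _
    rw [show N+1-1-i = N-i from by omega]
  have hsecond : ∏ i ∈ range (N+1), ((Polynomial.X : Polynomial ℤ)^N + Polynomial.X^((N+1)+i))
      = Polynomial.X^(N*(N+1)) * Hh (N+1) := by
    have h1 : ∀ i ∈ range (N+1), ((Polynomial.X : Polynomial ℤ)^N + Polynomial.X^((N+1)+i))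
        = Polynomial.X^N * (1 + Polynomial.X^(i+1)) := by
      intro i _
      rw [mul_add, mul_one, ← pow_add, show N + (i+1) = (N+1)+i from by omega]
    rw [Finset.prod_congr rfl h1, Finset.prod_mul_distrib, Finset.prod_const, Finset.card_range,
      ← pow_mul, ← Hh]
  rw [hfirst, hsecond, pow_add]
  ring

lemma main_dvd (N : ℕ) :
    (Polynomial.X : Polynomial ℤ)^(N+1) ∣
      Ev N * (1 - Polynomial.X^(N+1)) - Od (N+1) * S (N+1) := by
  have h := sum_congr_dvd N
  rw [← qbinom_eval (2*(N+1)) N, lhs_split N] at h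
  have h2 := Dvd.dvd.mul_right h (W (N+1) * W (N+1))
  have wsucc : W (N+1) = W N * (1 - Polynomial.X^(N+1)) := Finset.prod_range_succ _ _
  have hw1 : Hh N * W N = Ev N := HW N
  have hw2 : Hh (N+1) * W (N+1) = Ev (N+1) := HW (N+1)
  have e1 : Gp (N+1) * Hh (N+1) * (W (N+1) * W (N+1))
      = 2 * (Ev N * Ev (N+1) * (1 - Polynomial.X^(N+1))) := by
    rw [Gp_succ]
    linear_combination 2*(Hh N)*(Hh (N+1))*(W (N+1))*wsucc
      + 2*(Hh N)*(W N)*(1-(Polynomial.X:Polynomial ℤ)^(N+1))*hw2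
      + 2*(Ev (N+1))*(1-(Polynomial.X:Polynomial ℤ)^(N+1))*hw1
  have e2 : gb (2*(N+1)) (N+1) * (W (N+1) * W (N+1)) = Od (N+1) * Ev (N+1) := by
    have hg := gbW (2*(N+1)) (N+1) (by omega)
    rw [show 2*(N+1) - (N+1) = N+1 from by omega] at hg
    rw [hg, W2]
  have heq : (Polynomial.X^(tri (N+1) + N*(N+1)) * (Gp (N+1) * Hh (N+1))
        - Polynomial.X^(tri (N+1) + N*(N+1)) * (2 * gb (2*(N+1)) (N+1) * S (N+1)))
        * (W (N+1) * W (N+1))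
      = Polynomial.X^(tri (N+1) + N*(N+1)) *
        (2 * (Ev (N+1) * (Ev N * (1 - Polynomial.X^(N+1)) - Od (N+1) * S (N+1)))) := by
    linear_combination (Polynomial.X:Polynomial ℤ)^(tri (N+1) + N*(N+1)) * e1
      - 2 * (Polynomial.X:Polynomial ℤ)^(tri (N+1) + N*(N+1)) * S (N+1) * e2
  rw [heq] at h2
  have h3 := strip_X_pow h2
  have h4 := strip_two h3
  have hnd : ¬ (Polynomial.X : Polynomial ℤ) ∣ Ev (N+1) := by
    rw [Polynomial.X_dvd_iff, Ev, Polynomial.coeff_zero_eq_eval_zero, Polynomial.eval_prod]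
    simp
  exact Polynomial.prime_X.pow_dvd_of_dvd_mul_left (N+1) hnd h4

lemma final_poly (d : ℕ) :
    (Polynomial.X : Polynomial ℤ)^(d+1) ∣ Ev (d+1) - Od (d+1) * S (d+1) := by
  have h := main_dvd (d+1)
  have hOd : Od (d+2) = Od (d+1) * (1 - Polynomial.X^(2*(d+1)+1)) := Finset.prod_range_succ _ _
  have hs : S (d+2) = S (d+1) + Polynomial.X^(tri (d+2)) := Finset.sum_range_succ _ _
  have hexp : Ev (d+1) - Od (d+1) * S (d+1)
      = (Ev (d+1)*(1 - Polynomial.X^(d+1+1)) - Od (d+1+1) * S (d+1+1))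
        + Ev (d+1) * Polynomial.X^(d+2)
        + Od (d+1) * Polynomial.X^(tri (d+2))
        - Od (d+1) * S (d+1) * Polynomial.X^(2*(d+1)+1)
        - Od (d+1) * Polynomial.X^(tri (d+2)) * Polynomial.X^(2*(d+1)+1) := by
    rw [show d+1+1 = d+2 from rfl, hOd, hs]
    ring
  rw [hexp]
  have ht : d+1 ≤ tri (d+2) := le_tri_succ (d+1)
  apply dvd_sub
  apply dvd_sub
  apply dvd_add
  apply dvd_add
  · exact dvd_trans (pow_dvd_pow _ (by omega)) h
  · exact Dvd.dvd.mul_left (pow_dvd_pow _ (by omega)) _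
  · exact Dvd.dvd.mul_left (pow_dvd_pow _ (by omega)) _
  · exact Dvd.dvd.mul_left (pow_dvd_pow _ (by omega)) _
  · exact Dvd.dvd.mul_left (pow_dvd_pow _ (by omega)) _

lemma final_coeff (d : ℕ) :
    Polynomial.coeff (Od (d+1) * S (d+1)) d = Polynomial.coeff (Ev (d+1)) d := by
  have h := final_poly d
  rw [Polynomial.X_pow_dvd_iff] at h
  have h2 := h d (by omega)
  rw [Polynomial.coeff_sub, sub_eq_zero] at h2
  exact h2.symm

end GaussAux


/-- Gauss identity underlying the `c = 1`, `h = 1/16` twisted-sector character decomposition: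
as formal power series in `x`,
`∑_{n≥0} x^{n(n+1)/2} · ∏_{m≥1} (1 − x^{2m−1}) = ∏_{m≥1} (1 − x^{2m})`,
i.e. `∑_{n≥0} x^{n(n+1)/2} = ∏_{m≥1} (1 − x^{2m})/(1 − x^{2m−1})`.  Stated coefficientwise:
factors and summands of degree `> d` do not contribute to the coefficient of `x^d`. -/
theorem stmt10 : ∀ d : ℕ,
    PowerSeries.coeff (R := ℤ) d
      ((∑ n ∈ range (d + 1), (PowerSeries.X : PowerSeries ℤ) ^ (n * (n + 1) / 2)) *
        ∏ m ∈ range (d + 1), (1 - (PowerSeries.X : PowerSeries ℤ) ^ (2 * (m + 1) - 1)))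
    = PowerSeries.coeff (R := ℤ) d
        (∏ m ∈ range (d + 1), (1 - (PowerSeries.X : PowerSeries ℤ) ^ (2 * (m + 1)))) := by
  intro d
  have hcoe1 : (∑ n ∈ range (d + 1), (PowerSeries.X : PowerSeries ℤ) ^ (n * (n + 1) / 2))
      = ((GaussAux.S (d+1) : Polynomial ℤ) : PowerSeries ℤ) := by
    rw [GaussAux.S, ← Polynomial.coeToPowerSeries.ringHom_apply, map_sum]
    apply Finset.sum_congr rfl
    intro n _
    rw [map_pow, Polynomial.coeToPowerSeries.ringHom_apply, Polynomial.coe_X, GaussAux.tri_eq]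
  have hcoe2 : (∏ m ∈ range (d + 1), (1 - (PowerSeries.X : PowerSeries ℤ) ^ (2 * (m + 1) - 1)))
      = ((GaussAux.Od (d+1) : Polynomial ℤ) : PowerSeries ℤ) := by
    rw [GaussAux.Od, ← Polynomial.coeToPowerSeries.ringHom_apply, map_prod]
    apply Finset.prod_congr rfl
    intro m _
    rw [map_sub, map_one, map_pow, Polynomial.coeToPowerSeries.ringHom_apply, Polynomial.coe_X,
      show 2*(m+1)-1 = 2*m+1 from by omega]
  have hcoe3 : (∏ m ∈ range (d + 1), (1 - (PowerSeries.X : PowerSeries ℤ) ^ (2 * (m + 1))))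
      = ((GaussAux.Ev (d+1) : Polynomial ℤ) : PowerSeries ℤ) := by
    rw [GaussAux.Ev, ← Polynomial.coeToPowerSeries.ringHom_apply, map_prod]
    apply Finset.prod_congr rfl
    intro m _
    rw [map_sub, map_one, map_pow, Polynomial.coeToPowerSeries.ringHom_apply, Polynomial.coe_X,
      show 2*(m+1) = 2*m+2 from by omega]
  rw [hcoe1, hcoe2, hcoe3, ← Polynomial.coe_mul, Polynomial.coeff_coe, Polynomial.coeff_coe,
    mul_comm]
  exact GaussAux.final_coeff d
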